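/- If S is a consistent set of L-sentences (i.e. S ∪ SPO is satisfiable), then the set of compatible extensions Ext(S) is nonempty. (Step in the proof of Proposition 3.) -/

import Mathlib

open FirstOrder Language

namespace Brevis

/-- The base language with a single binary relation symbol `R`. -/
def baseLang : Language where
  Functions := fun _ => Empty
  Relations := fun n => match n with
    | 2 => Unit
    | _ => Empty

/-- The binary relation symbol `R` of `baseLang`. -/
def Rsym : baseLang.Relations 2 := Unit.unit

/-- The base language with a binary relation symbol `R` and one 0-ary relation symbol `P`. -/
def baseLangP : Language where
  Functions := fun _ => Empty
  Relations := fun n => match n with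
    | 0 => Unit
    | 2 => Unit
    | _ => Empty

/-- The binary relation symbol `R` of `baseLangP`. -/
def RsymP : baseLangP.Relations 2 := Unit.unit

/-- The 0-ary relation symbol `P` of `baseLangP`. -/
def Psym : baseLangP.Relations 0 := Unit.unit

/-- The atomic sentence `p` given by the propositional symbol `P`. -/
def pSent (ι : Type) : (baseLangP[[ι]]).Sentence :=
  Relations.formula (Sum.inl Psym) ![]

variable (L₀ : FirstOrder.Language.{0, 0}) (R : L₀.Relations 2) (ι : Type) [Fintype ι]

/-- The atomic sentence `d < d'`, i.e. `R (c_d) (c_d')`. -/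
def ltSent (d d' : ι) : (L₀[[ι]]).Sentence :=
  Relations.boundedFormula₂ (Sum.inl R) (L₀.con d).term (L₀.con d').term

/-- The theory `SPO` asserting that `R` is a strict partial order (irreflexive and transitive). -/
def spo : (L₀[[ι]]).Theory :=
  {Relations.irreflexive (Sum.inl R), Relations.transitive (Sum.inl R)}

/-- A set of sentences is consistent iff together with `SPO` it is satisfiable. -/
def Consistent (S : (L₀[[ι]]).Theory) : Prop :=
  Theory.IsSatisfiable (S ∪ spo L₀ R ι)

open scoped Classical in
/-- The extension base `B(e)` determined by the linear order `e` on the names. -/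
noncomputable def base (e : LinearOrder ι) (form : ι → (L₀[[ι]]).Sentence) :
    (L₀[[ι]]).Theory :=
  letI := e
  (Finset.univ.sort (· ≤ · : ι → ι → Prop)).foldl
    (fun B d => if Consistent L₀ R ι (B ∪ {form d}) then B ∪ {form d} else B) ∅

/-- The deductive closure (modulo `SPO`) of a set of sentences:
all sentences satisfied in every model of `S ∪ SPO`. -/
def closure (S : (L₀[[ι]]).Theory) : Set (L₀[[ι]]).Sentence :=
  {φ | (S ∪ spo L₀ R ι) ⊨ᵇ φ}

/-- The extension `E(e)` generated by the linear order `e`. -/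
noncomputable def extension (e : LinearOrder ι) (form : ι → (L₀[[ι]]).Sentence) :
    Set (L₀[[ι]]).Sentence :=
  closure L₀ R ι (base L₀ R ι e form)

/-- A strict partial order `p` on the names is compatible with `S` iff
`S ∪ SPO ∪ {d < d' | p d d'} ∪ {¬ (d < d') | ¬ p d d'}` is satisfiable. -/
def Compatible (p : ι → ι → Prop) (S : (L₀[[ι]]).Theory) : Prop :=
  Theory.IsSatisfiable
    (S ∪ spo L₀ R ι ∪ {φ | ∃ d d', p d d' ∧ φ = ltSent L₀ R ι d d'} ∪
      {φ | ∃ d d', ¬ p d d' ∧ φ = ∼(ltSent L₀ R ι d d')})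

/-- `Exts form S`: the set of extensions `E(e)` where `e` is a linear order extending some
strict partial order compatible with `S`. -/
def Exts (form : ι → (L₀[[ι]]).Sentence) (S : (L₀[[ι]]).Theory) :
    Set (Set (L₀[[ι]]).Sentence) :=
  {E | ∃ (e : LinearOrder ι) (p : ι → ι → Prop), IsStrictOrder ι p ∧
    Compatible L₀ R ι p S ∧ (∀ d d', p d d' → e.lt d d') ∧ E = extension L₀ R ι e form}

/-- The operator `C`. -/
def C (form : ι → (L₀[[ι]]).Sentence) (S : (L₀[[ι]]).Theory) : (L₀[[ι]]).Theory :=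
  ⋂₀ Exts L₀ R ι form S

/-- The least fixed point of `C` (Knaster–Tarski): the set of accepted conclusions. -/
def lfpC (form : ι → (L₀[[ι]]).Sentence) : (L₀[[ι]]).Theory :=
  sInf {S | C L₀ R ι form S ⊆ S}


/-- If `S` is consistent then the set of compatible extensions is nonempty. -/
theorem Exts_nonempty_of_consistent (ι : Type) [Fintype ι]
    (form : ι → (baseLang[[ι]]).Sentence) (S : (baseLang[[ι]]).Theory)
    (h : Theory.IsSatisfiable (S ∪ spo baseLang Rsym ι)) :
    (Exts baseLang Rsym ι form S).Nonempty := by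
  classical
  obtain ⟨M⟩ := h
  -- the strict partial order induced by the model
  set p : ι → ι → Prop := fun d d' => (M : Type) ⊨ ltSent baseLang Rsym ι d d' with hp
  have hMS : (M : Type) ⊨ S := Theory.Model.mono M.is_model Set.subset_union_left
  have hspo : (M : Type) ⊨ spo baseLang Rsym ι :=
    Theory.Model.mono M.is_model Set.subset_union_right
  have hirr' : Sentence.Realize (M : Type)
      (Relations.irreflexive (Sum.inl Rsym : (baseLang[[ι]]).Relations 2)) :=
    hspo.realize_of_mem _ (by simp [spo])
  have htr' : Sentence.Realize (M : Type)
      (Relations.transitive (Sum.inl Rsym : (baseLang[[ι]]).Relations 2)) :=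
    hspo.realize_of_mem _ (by simp [spo])
  have hirr := Relations.realize_irreflexive.mp hirr'
  have htr := Relations.realize_transitive.mp htr'
  haveI hpirr : IsIrrefl ι p := by
    constructor
    intro d hd
    simp only [hp, ltSent, Sentence.Realize, Formula.Realize,
      BoundedFormula.realize_rel₂] at hd
    exact hirr.irrefl _ (BoundedFormula.realize_rel₂.mp hd)
  haveI hptrans : IsTrans ι p := by
    constructor
    intro a b c hab hbc
    simp only [hp, ltSent, Sentence.Realize, Formula.Realize,
      BoundedFormula.realize_rel₂] at hab hbc ⊢
    exact BoundedFormula.realize_rel₂.mpr (htr.trans _ _ _ (BoundedFormula.realize_rel₂.mp hab) (BoundedFormula.realize_rel₂.mp hbc))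
  have hpso : IsStrictOrder ι p := ⟨⟩
  -- extend p to a linear order
  set r : ι → ι → Prop := fun a b => a = b ∨ p a b with hr
  haveI : IsRefl ι r := ⟨fun a => Or.inl rfl⟩
  haveI : IsTrans ι r := by
    constructor
    rintro a b c (rfl | hab) (rfl | hbc)
    · exact Or.inl rfl
    · exact Or.inr hbc
    · exact Or.inr hab
    · exact Or.inr (_root_.trans hab hbc)
  haveI : IsAntisymm ι r := by
    constructor
    rintro a b (rfl | hab) (h | hba)
    · rfl
    · rfl
    · exact h.symm
    · exact absurd (_root_.trans hab hba) (irrefl_of p a)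
  haveI : IsPreorder ι r := ⟨⟩
  haveI : IsPartialOrder ι r := ⟨⟩
  obtain ⟨s, hs, hrs⟩ := extend_partialOrder r
  haveI := hs
  set t : ι → ι → Prop := fun a b => s a b ∧ ¬ s b a with ht
  haveI : IsTrichotomous ι t := by
    constructor
    intro a b h1 h2
    by_cases hab : s a b
    · by_cases hba : s b a
      · exact antisymm hab hba
      · exact (h1 ⟨hab, hba⟩).elim
    · have hba : s b a := (total_of s a b).resolve_left hab
      exact (h2 ⟨hba, hab⟩).elim
  haveI : IsIrrefl ι t := ⟨fun a ha => ha.2 ha.1⟩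
  haveI : IsTrans ι t := by
    constructor
    rintro a b c ⟨hab, hba⟩ ⟨hbc, hcb⟩
    exact ⟨_root_.trans hab hbc, fun hca => hba (_root_.trans hbc hca)⟩
  haveI : IsStrictOrder ι t := ⟨⟩
  haveI : IsStrictTotalOrder ι t := ⟨⟩
  set e : LinearOrder ι := linearOrderOfSTO t with he
  have hpt : ∀ d d', p d d' → e.lt d d' := by
    intro d d' hdd'
    have hsd : s d d' := hrs d d' (Or.inr hdd')
    refine ⟨hsd, fun hsd' => ?_⟩
    have : d = d' := antisymm hsd hsd'
    subst this
    exact irrefl_of p d hdd'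
  refine ⟨extension baseLang Rsym ι e form, e, p, hpso, ?_, hpt, rfl⟩
  -- compatibility witnessed by M
  have hbig : (M : Type) ⊨
      (S ∪ spo baseLang Rsym ι ∪ {φ | ∃ d d', p d d' ∧ φ = ltSent baseLang Rsym ι d d'} ∪
        {φ | ∃ d d', ¬ p d d' ∧ φ = ∼(ltSent baseLang Rsym ι d d')}) := by
    rw [Theory.model_union_iff, Theory.model_union_iff, Theory.model_union_iff]
    refine ⟨⟨⟨hMS, hspo⟩, ?_⟩, ?_⟩
    · constructor
      rintro φ ⟨d, d', hdd', rfl⟩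
      exact hdd'
    · constructor
      rintro φ ⟨d, d', hdd', rfl⟩
      rw [Sentence.realize_not]
      exact hdd'
  exact ⟨@Theory.ModelType.mk _ _ (M : Type) _ hbig M.nonempty'⟩

end Brevis
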